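/- Let K be a field, let Q ∈ K[[φ]][z] be a polynomial in z with power series coefficients such that Q|_{φ=0} (the polynomial in K[z] obtained by taking the constant coefficient of each power series coefficient of Q) is nonzero, and let k be a positive integer. Let A = { h ∈ K[[φ]] : Q(h) ≡ 0 mod φ^k }. Then there exist an integer ℓ̂ with 0 ≤ ℓ̂ ≤ deg_z( Q|_{φ=0} ), power series h_1, …, h_ℓ̂ ∈ K[[φ]], and positive integers d_1, …, d_ℓ̂ such that the sets h_i + φ^{d_i}·K[[φ]] (i = 1, …, ℓ̂) are pairwise disjoint and their union equals A. -/

import Mathlib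

open Polynomial PowerSeries

namespace Stmt15Aux

variable {K : Type} [Field K]

/-- The ball of center `p.1` and radius `X ^ p.2`. -/
def ball (p : PowerSeries K × ℕ) : Set (PowerSeries K) :=
  {g : PowerSeries K | (PowerSeries.X : PowerSeries K) ^ p.2 ∣ g - p.1}

lemma coeff_comp_C_mul_X {A : Type*} [CommSemiring A] (p : A[X]) (c : A) (j : ℕ) :
    (p.comp (Polynomial.C c * Polynomial.X)).coeff j = p.coeff j * c ^ j := by
  induction p using Polynomial.induction_on' with
  | add p q hp hq => simp [add_comp, hp, hq, add_mul]
  | monomial n a =>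
      rw [monomial_comp]
      rw [mul_pow, ← C_pow, ← mul_assoc, ← C_mul, Polynomial.coeff_C_mul,
        Polynomial.coeff_X_pow, Polynomial.coeff_monomial]
      split_ifs with h h' h'
      · subst h'; simp [mul_comm]
      · omega
      · omega
      · simp

lemma exists_factor (P : Polynomial (PowerSeries K)) (hP : P ≠ 0) :
    ∃ (m : ℕ) (R : Polynomial (PowerSeries K)),
      P = Polynomial.C (PowerSeries.X ^ m) * R ∧
      R.map (PowerSeries.constantCoeff (R := K)) ≠ 0 := by
  classical
  have hsupp : P.support.Nonempty := Polynomial.support_nonempty.2 hP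
  obtain ⟨i0, hi0, hmin⟩ := P.support.exists_min_image
    (fun i => (P.coeff i).order) hsupp
  have hc0 : P.coeff i0 ≠ 0 := Polynomial.mem_support_iff.1 hi0
  have hfin : (P.coeff i0).order ≠ ⊤ := by
    simpa [PowerSeries.order_eq_top] using hc0
  set m : ℕ := (P.coeff i0).order.toNat with hm
  have hmo : ((m : ℕ∞)) = (P.coeff i0).order := ENat.coe_toNat hfin
  have hdvd : Polynomial.C ((PowerSeries.X : PowerSeries K) ^ m) ∣ P := by
    rw [Polynomial.C_dvd_iff_dvd_coeff]
    intro i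
    by_cases hi : i ∈ P.support
    · rw [PowerSeries.X_pow_dvd_iff]
      intro n hn
      apply PowerSeries.coeff_of_lt_order
      calc (n : ℕ∞) < (m : ℕ∞) := by exact_mod_cast hn
        _ = (P.coeff i0).order := hmo
        _ ≤ (P.coeff i).order := hmin i hi
    · rw [Polynomial.notMem_support_iff.1 hi]
      exact dvd_zero _
  obtain ⟨R, hR⟩ := hdvd
  refine ⟨m, R, hR, ?_⟩
  intro hmap
  have h0 : PowerSeries.constantCoeff (R := K) (R.coeff i0) = 0 := by
    have := congrArg (fun q => Polynomial.coeff q i0) hmap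
    simpa [Polynomial.coeff_map] using this
  have hord : 1 ≤ (R.coeff i0).order := by
    apply PowerSeries.nat_le_order
    intro i hi
    interval_cases i
    simpa [PowerSeries.coeff_zero_eq_constantCoeff] using h0
  have hPo : (P.coeff i0).order = (m : ℕ∞) + (R.coeff i0).order := by
    have : P.coeff i0 = (PowerSeries.X : PowerSeries K) ^ m * R.coeff i0 := by
      rw [hR, Polynomial.coeff_C_mul]
    rw [this, PowerSeries.order_mul, PowerSeries.order_X_pow]
  have hcon : ((m : ℕ∞)) + 1 ≤ (m : ℕ∞) := by
    calc ((m : ℕ∞)) + 1 ≤ (m : ℕ∞) + (R.coeff i0).order := add_le_add_right hord _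
      _ = (P.coeff i0).order := hPo.symm
      _ = (m : ℕ∞) := hmo.symm
  have h2 : (m : ℕ∞) < (m : ℕ∞) + 1 := by exact_mod_cast lt_add_one m
  exact absurd hcon (not_le.2 h2)

lemma taylor_coeff_rootMultiplicity_ne_zero {p : K[X]} (hp : p ≠ 0) (a : K) :
    (Polynomial.taylor a p).coeff (p.rootMultiplicity a) ≠ 0 := by
  set m := p.rootMultiplicity a with hm
  set u := p /ₘ (Polynomial.X - Polynomial.C a) ^ m with hu
  have hfac := Polynomial.pow_mul_divByMonic_rootMultiplicity_eq p a
  have hne := Polynomial.eval_divByMonic_pow_rootMultiplicity_ne_zero a hp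
  have key : Polynomial.taylor a p = Polynomial.X ^ m * Polynomial.taylor a u := by
    conv_lhs => rw [← hfac]
    rw [Polynomial.taylor_apply, Polynomial.taylor_apply, Polynomial.mul_comp,
      Polynomial.pow_comp, Polynomial.sub_comp, Polynomial.X_comp, Polynomial.C_comp]
    simp
    rfl
  rw [key]
  have h2 : (Polynomial.X ^ m * Polynomial.taylor a u).coeff (0 + m) =
      (Polynomial.taylor a u).coeff 0 := Polynomial.coeff_X_pow_mul _ _ _
  rw [zero_add] at h2
  rw [h2, Polynomial.taylor_coeff_zero]
  exact hne

lemma cc_eq_of_mem_ball {p : PowerSeries K × ℕ} (hp : 0 < p.2) {g : PowerSeries K}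
    (hg : g ∈ ball p) :
    PowerSeries.constantCoeff (R := K) g = PowerSeries.constantCoeff (R := K) p.1 := by
  have h1 : (PowerSeries.X : PowerSeries K) ∣ g - p.1 :=
    dvd_trans (dvd_pow_self _ hp.ne') hg
  rw [PowerSeries.X_dvd_iff, map_sub, sub_eq_zero] at h1
  exact h1

lemma mem_ball_shift (a : K) (h : PowerSeries K) (d : ℕ) (f : PowerSeries K) :
    f ∈ ball (PowerSeries.C (R := K) a + PowerSeries.X * h, d + 1) ↔
      ∃ g, g ∈ ball (h, d) ∧ f = PowerSeries.C (R := K) a + PowerSeries.X * g := by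
  constructor
  · rintro ⟨t, ht⟩
    refine ⟨h + PowerSeries.X ^ d * t, ⟨t, by ring⟩, ?_⟩
    simp only [ball, Set.mem_setOf_eq] at ht
    linear_combination ht
  · rintro ⟨g, ⟨t, ht⟩, rfl⟩
    refine ⟨t, ?_⟩
    simp only [ball, Set.mem_setOf_eq] at ht ⊢
    linear_combination PowerSeries.X * ht

theorem key : ∀ (k : ℕ), 0 < k → ∀ Q : Polynomial (PowerSeries K),
    Q.map (PowerSeries.constantCoeff (R := K)) ≠ 0 →
    ∃ B : Finset (PowerSeries K × ℕ),
      B.card ≤ (Q.map (PowerSeries.constantCoeff (R := K))).natDegree ∧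
      (∀ p ∈ B, 0 < p.2) ∧
      (∀ p ∈ B, ∀ q ∈ B, p ≠ q → ball p ∩ ball q = ∅) ∧
      (⋃ p ∈ B, ball p) =
        {g : PowerSeries K | (PowerSeries.X : PowerSeries K) ^ k ∣ Q.eval g} := by
  intro k
  induction k using Nat.strong_induction_on with
  | _ k IH =>
  intro hk Q hQ
  classical
  set Q0 := Q.map (PowerSeries.constantCoeff (R := K)) with hQ0def
  have hQne : Q ≠ 0 := fun h => hQ (by simp [hQ0def, h])
  set S := Q0.roots.toFinset with hSdef
  have eval_cc : ∀ g : PowerSeries K, PowerSeries.constantCoeff (R := K) (Q.eval g)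
      = Q0.eval (PowerSeries.constantCoeff (R := K) g) := by
    intro g
    rw [hQ0def, Polynomial.eval_map]
    exact (Polynomial.eval₂_at_apply (PowerSeries.constantCoeff (R := K)) g).symm
  -- per-root construction
  have hAa : ∀ a : K, ∃ Ba : Finset (PowerSeries K × ℕ), a ∈ S →
      Ba.card ≤ Q0.rootMultiplicity a ∧
      (∀ p ∈ Ba, 0 < p.2) ∧
      (∀ p ∈ Ba, PowerSeries.constantCoeff (R := K) p.1 = a) ∧
      (∀ p ∈ Ba, ∀ q ∈ Ba, p ≠ q → ball p ∩ ball q = ∅) ∧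
      (⋃ p ∈ Ba, ball p) = {g : PowerSeries K |
        (PowerSeries.X : PowerSeries K) ^ k ∣ Q.eval g ∧
          PowerSeries.constantCoeff (R := K) g = a} := by
    intro a
    by_cases haS : a ∈ S
    swap
    · exact ⟨∅, fun h => absurd h haS⟩
    have ha : Q0.IsRoot a := (Polynomial.mem_roots'.1 (Multiset.mem_toFinset.1 haS)).2
    set b := PowerSeries.C (R := K) a with hb
    set Qa := Q.comp (Polynomial.C b +
      Polynomial.C (PowerSeries.X : PowerSeries K) * Polynomial.X) with hQa
    have hQaeval : ∀ g, Qa.eval g = Q.eval (b + PowerSeries.X * g) := by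
      intro g
      rw [hQa, Polynomial.eval_comp]
      simp
    have hQane : Qa ≠ 0 := by
      intro h
      rcases Polynomial.comp_eq_zero_iff.1 h with h1 | ⟨_, h2⟩
      · exact hQne h1
      · have h3 := congrArg (fun p => Polynomial.coeff p 1) h2
        simp [Polynomial.coeff_C] at h3
    have hQamap : Qa.map (PowerSeries.constantCoeff (R := K)) = 0 := by
      have hlin : (Polynomial.C b +
          Polynomial.C (PowerSeries.X : PowerSeries K) * Polynomial.X).map
            (PowerSeries.constantCoeff (R := K)) = Polynomial.C a := by
        simp [Polynomial.map_add, Polynomial.map_mul, PowerSeries.constantCoeff_X,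
          PowerSeries.constantCoeff_C, hb]
      rw [hQa, Polynomial.map_comp, hlin, Polynomial.comp_C, ← hQ0def]
      simpa using ha
    obtain ⟨m, Ra, hfac, hRamap⟩ := exists_factor Qa hQane
    have hQacoeff : ∀ j, Qa.coeff j =
        (Polynomial.taylor b Q).coeff j * PowerSeries.X ^ j := by
      intro j
      have h1 : Qa = (Polynomial.taylor b Q).comp
          (Polynomial.C (PowerSeries.X : PowerSeries K) * Polynomial.X) := by
        rw [Polynomial.taylor_apply, Polynomial.comp_assoc, hQa]
        congr 1
        rw [Polynomial.add_comp, Polynomial.X_comp, Polynomial.C_comp, add_comm]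
      rw [h1, coeff_comp_C_mul_X]
    have hTmap : (Polynomial.taylor b Q).map (PowerSeries.constantCoeff (R := K))
        = Polynomial.taylor a Q0 := by
      rw [Polynomial.taylor_apply, Polynomial.taylor_apply, Polynomial.map_comp, ← hQ0def]
      simp [PowerSeries.constantCoeff_C, hb]
    set m' := Q0.rootMultiplicity a with hm'
    have hccT : PowerSeries.constantCoeff (R := K) ((Polynomial.taylor b Q).coeff m') ≠ 0 := by
      have h1 := taylor_coeff_rootMultiplicity_ne_zero (p := Q0) hQ a
      intro h
      apply h1
      have : ((Polynomial.taylor b Q).map (PowerSeries.constantCoeff (R := K))).coeff m' = 0 := by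
        rw [Polynomial.coeff_map]
        exact h
      rwa [hTmap] at this
    have hordT : (Qa.coeff m').order = (m' : ℕ∞) := by
      rw [hQacoeff, PowerSeries.order_mul, PowerSeries.order_X_pow]
      have h0 : ((Polynomial.taylor b Q).coeff m').order = 0 := by
        apply le_antisymm
        · exact PowerSeries.order_le 0
            (by simpa [PowerSeries.coeff_zero_eq_constantCoeff] using hccT)
        · exact zero_le
      rw [h0, zero_add]
    have hm_le : m ≤ m' := by
      have h1 : (m : ℕ∞) ≤ (Qa.coeff m').order := by
        have : Qa.coeff m' = (PowerSeries.X : PowerSeries K) ^ m * Ra.coeff m' := by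
          rw [hfac, Polynomial.coeff_C_mul]
        rw [this, PowerSeries.order_mul, PowerSeries.order_X_pow]
        exact le_self_add
      rw [hordT] at h1
      exact_mod_cast h1
    have hm1 : 1 ≤ m := by
      by_contra h
      push_neg at h
      interval_cases m
      have hQR : Qa = Ra := by simpa using hfac
      exact hRamap (by rw [← hQR, hQamap])
    have hdeg : (Ra.map (PowerSeries.constantCoeff (R := K))).natDegree ≤ m' := by
      rw [Polynomial.natDegree_le_iff_coeff_eq_zero]
      intro j hj
      rw [Polynomial.coeff_map]
      by_contra hne
      have hordR : (Ra.coeff j).order = 0 :=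
        le_antisymm (PowerSeries.order_le 0
          (by simpa [PowerSeries.coeff_zero_eq_constantCoeff] using hne)) zero_le
      have h1 : (Qa.coeff j).order = (m : ℕ∞) := by
        have : Qa.coeff j = (PowerSeries.X : PowerSeries K) ^ m * Ra.coeff j := by
          rw [hfac, Polynomial.coeff_C_mul]
        rw [this, PowerSeries.order_mul, PowerSeries.order_X_pow, hordR, add_zero]
      have h2 : (j : ℕ∞) ≤ (Qa.coeff j).order := by
        rw [hQacoeff, PowerSeries.order_mul, PowerSeries.order_X_pow]
        exact le_add_self
      rw [h1] at h2
      have : j ≤ m := by exact_mod_cast h2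
      omega
    have hm'pos : 0 < m' := (Polynomial.rootMultiplicity_pos hQ).2 ha
    have heval : ∀ g, Q.eval (b + PowerSeries.X * g)
        = PowerSeries.X ^ m * Ra.eval g := by
      intro g
      rw [← hQaeval, hfac, Polynomial.eval_mul, Polynomial.eval_C]
    have hdecomp : ∀ g : PowerSeries K, PowerSeries.constantCoeff (R := K) g = a →
        ∃ t, g = b + PowerSeries.X * t := by
      intro g hg
      have hX : (PowerSeries.X : PowerSeries K) ∣ g - b :=
        PowerSeries.X_dvd_iff.2 (by simp [hg, hb, PowerSeries.constantCoeff_C])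
      rcases hX with ⟨t, ht⟩
      exact ⟨t, by linear_combination ht⟩
    by_cases hmk : k ≤ m
    · -- the whole coset of `a` consists of roots
      refine ⟨{(b, 1)}, fun _ => ⟨by simp; omega, ?_, ?_, ?_, ?_⟩⟩
      · intro p hp
        rw [Finset.mem_singleton] at hp
        subst hp
        norm_num
      · intro p hp
        rw [Finset.mem_singleton] at hp
        subst hp
        simpa [hb] using PowerSeries.constantCoeff_C a
      · intro p hp q hq hpq
        rw [Finset.mem_singleton] at hp hq
        exact absurd (hp.trans hq.symm) hpq
      · ext f
        simp only [Set.mem_iUnion, Finset.mem_singleton, Set.mem_setOf_eq,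
          exists_prop, exists_eq_left]
        constructor
        · intro hf
          have hcc : PowerSeries.constantCoeff (R := K) f = a := by
            have := cc_eq_of_mem_ball (p := (b, 1)) one_pos hf
            simpa [hb, PowerSeries.constantCoeff_C] using this
          obtain ⟨t, rfl⟩ := hdecomp f hcc
          refine ⟨?_, hcc⟩
          rw [heval]
          exact Dvd.dvd.mul_right (pow_dvd_pow _ hmk) _
        · rintro ⟨-, hcc⟩
          obtain ⟨t, rfl⟩ := hdecomp f hcc
          exact ⟨t, by ring⟩
    · push_neg at hmk
      set k' := k - m with hk'def
      have hk' : 0 < k' := by omega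
      have hk'lt : k' < k := by omega
      obtain ⟨B', hB'card, hB'pos, hB'disj, hB'union⟩ := IH k' hk'lt hk' Ra hRamap
      set F : PowerSeries K × ℕ → PowerSeries K × ℕ :=
        fun p => (b + PowerSeries.X * p.1, p.2 + 1) with hF
      have hFinj : Function.Injective F := by
        rintro ⟨h1, d1⟩ ⟨h2, d2⟩ hE
        simp only [hF, Prod.mk.injEq] at hE
        obtain ⟨h12, d12⟩ := hE
        have hh : h1 = h2 := by
          have hXne : (PowerSeries.X : PowerSeries K) ≠ 0 := PowerSeries.X_ne_zero
          apply mul_left_cancel₀ hXne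
          linear_combination h12
        exact Prod.ext hh (by omega)
      have hballF : ∀ p : PowerSeries K × ℕ, ∀ f, f ∈ ball (F p) ↔
          ∃ g, g ∈ ball p ∧ f = b + PowerSeries.X * g := by
        intro p f
        exact mem_ball_shift a p.1 p.2 f
      refine ⟨B'.image F, fun _ => ⟨?_, ?_, ?_, ?_, ?_⟩⟩
      · rw [Finset.card_image_of_injective _ hFinj]
        exact hB'card.trans hdeg
      · intro p hp
        obtain ⟨q, hq, rfl⟩ := Finset.mem_image.1 hp
        simp [hF]
      · intro p hp
        obtain ⟨q, hq, rfl⟩ := Finset.mem_image.1 hp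
        simp [hF, hb, PowerSeries.constantCoeff_C, PowerSeries.constantCoeff_X]
      · intro p hp q hq hpq
        obtain ⟨p', hp', rfl⟩ := Finset.mem_image.1 hp
        obtain ⟨q', hq', rfl⟩ := Finset.mem_image.1 hq
        have hne : p' ≠ q' := fun h => hpq (by rw [h])
        rw [Set.eq_empty_iff_forall_notMem]
        rintro f ⟨hf1, hf2⟩
        obtain ⟨g1, hg1, rfl⟩ := (hballF p' f).1 hf1
        obtain ⟨g2, hg2, heq⟩ := (hballF q' _).1 hf2
        have hgg : g1 = g2 := by
          have hXne : (PowerSeries.X : PowerSeries K) ≠ 0 := PowerSeries.X_ne_zero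
          apply mul_left_cancel₀ hXne
          linear_combination heq
        subst hgg
        have := hB'disj p' hp' q' hq' hne
        rw [Set.eq_empty_iff_forall_notMem] at this
        exact this g1 ⟨hg1, hg2⟩
      · ext f
        simp only [Set.mem_iUnion, Set.mem_setOf_eq, exists_prop]
        constructor
        · rintro ⟨p, hp, hf⟩
          obtain ⟨p', hp', rfl⟩ := Finset.mem_image.1 hp
          obtain ⟨g, hg, rfl⟩ := (hballF p' f).1 hf
          have hgU : g ∈ ⋃ p ∈ B', ball p := Set.mem_biUnion hp' hg
          rw [hB'union] at hgU
          have hgk' : (PowerSeries.X : PowerSeries K) ^ k' ∣ Ra.eval g := hgU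
          constructor
          · rw [heval]
            have : (PowerSeries.X : PowerSeries K) ^ k
                = PowerSeries.X ^ m * PowerSeries.X ^ k' := by
              rw [← pow_add]
              congr 1
              omega
            rw [this]
            exact mul_dvd_mul_left _ hgk'
          · simp [hb, PowerSeries.constantCoeff_C, PowerSeries.constantCoeff_X]
        · rintro ⟨hfk, hfa⟩
          obtain ⟨t, rfl⟩ := hdecomp f hfa
          have hdd : (PowerSeries.X : PowerSeries K) ^ m * PowerSeries.X ^ k'
              ∣ PowerSeries.X ^ m * Ra.eval t := by
            rw [← pow_add]
            have hmk' : m + k' = k := by omega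
            rw [hmk', ← heval]
            exact hfk
          have ht : (PowerSeries.X : PowerSeries K) ^ k' ∣ Ra.eval t :=
            (mul_dvd_mul_iff_left (pow_ne_zero m PowerSeries.X_ne_zero)).1 hdd
          have htU : t ∈ ⋃ p ∈ B', ball p := by
            rw [hB'union]
            exact ht
          obtain ⟨p', hp', hball⟩ := Set.mem_iUnion₂.1 htU
          exact ⟨F p', Finset.mem_image_of_mem F hp', (hballF p' _).2 ⟨t, hball, rfl⟩⟩
  choose Fam hFam using hAa
  refine ⟨S.biUnion Fam, ?_, ?_, ?_, ?_⟩
  · calc (S.biUnion Fam).card ≤ ∑ a ∈ S, (Fam a).card := Finset.card_biUnion_le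
      _ ≤ ∑ a ∈ S, Q0.rootMultiplicity a :=
          Finset.sum_le_sum fun a ha => (hFam a ha).1
      _ = ∑ a ∈ S, Q0.roots.count a :=
          Finset.sum_congr rfl fun a _ => (Polynomial.count_roots Q0).symm
      _ = Multiset.card Q0.roots := Multiset.toFinset_sum_count_eq _
      _ ≤ Q0.natDegree := Polynomial.card_roots' Q0
  · intro p hp
    obtain ⟨a, ha, hpa⟩ := Finset.mem_biUnion.1 hp
    exact (hFam a ha).2.1 p hpa
  · intro p hp q hq hpq
    obtain ⟨a, ha, hpa⟩ := Finset.mem_biUnion.1 hp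
    obtain ⟨a', ha', hqa⟩ := Finset.mem_biUnion.1 hq
    by_cases haa : a = a'
    · subst haa
      exact (hFam a ha).2.2.2.1 p hpa q hqa hpq
    · rw [Set.eq_empty_iff_forall_notMem]
      rintro f ⟨hf1, hf2⟩
      apply haa
      calc a = PowerSeries.constantCoeff (R := K) p.1 := ((hFam a ha).2.2.1 p hpa).symm
        _ = PowerSeries.constantCoeff (R := K) f := (cc_eq_of_mem_ball ((hFam a ha).2.1 p hpa) hf1).symm
        _ = PowerSeries.constantCoeff (R := K) q.1 := cc_eq_of_mem_ball ((hFam a' ha').2.1 q hqa) hf2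
        _ = a' := (hFam a' ha').2.2.1 q hqa
  · ext g
    simp only [Set.mem_iUnion, Set.mem_setOf_eq, exists_prop]
    constructor
    · rintro ⟨p, hp, hgp⟩
      obtain ⟨a, ha, hpa⟩ := Finset.mem_biUnion.1 hp
      have : g ∈ ⋃ p ∈ Fam a, ball p := Set.mem_biUnion hpa hgp
      rw [(hFam a ha).2.2.2.2] at this
      exact this.1
    · intro hg
      set a := PowerSeries.constantCoeff (R := K) g with hadef
      have haroot : Q0.IsRoot a := by
        have h1 : PowerSeries.constantCoeff (R := K) (Q.eval g) = 0 := by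
          have hX : (PowerSeries.X : PowerSeries K) ∣ Q.eval g :=
            dvd_trans (dvd_pow_self _ hk.ne') hg
          rw [PowerSeries.X_dvd_iff] at hX
          exact hX
        rw [eval_cc] at h1
        exact h1
      have haS : a ∈ S := Multiset.mem_toFinset.2 (Polynomial.mem_roots'.2 ⟨hQ, haroot⟩)
      have : g ∈ ⋃ p ∈ Fam a, ball p := by
        rw [(hFam a haS).2.2.2.2]
        exact ⟨hg, rfl⟩
      obtain ⟨p, hpa, hgp⟩ := Set.mem_iUnion₂.1 this
      exact ⟨p, Finset.mem_biUnion.2 ⟨a, haS, hpa⟩, hgp⟩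

end Stmt15Aux

/-- Structure of the set of roots of order `k`: let `K` be a field, `Q ∈ K[[φ]][z]` with
`Q|_{φ=0} ≠ 0`, and `k ≥ 1`.  Then the set `A = {h ∈ K[[φ]] : φ^k ∣ Q(h)}` is the
disjoint union of at most `deg_z (Q|_{φ=0})` sets of the form `h_i + φ^{d_i}·K[[φ]]` with
`d_i ≥ 1`. -/
theorem stmt_15 {K : Type} [Field K] (Q : Polynomial (PowerSeries K))
    (hQ : Q.map (PowerSeries.constantCoeff (R := K)) ≠ 0) (k : ℕ) (hk : 0 < k) :
    ∃ (L : ℕ), L ≤ (Q.map (PowerSeries.constantCoeff (R := K))).natDegree ∧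
      ∃ (h : Fin L → PowerSeries K) (d : Fin L → ℕ),
        (∀ i, 0 < d i) ∧
        (∀ i j, i ≠ j →
          {g : PowerSeries K | (PowerSeries.X : PowerSeries K) ^ d i ∣ g - h i} ∩
            {g : PowerSeries K | (PowerSeries.X : PowerSeries K) ^ d j ∣ g - h j} = ∅) ∧
        (⋃ i, {g : PowerSeries K | (PowerSeries.X : PowerSeries K) ^ d i ∣ g - h i}) =
          {g : PowerSeries K | (PowerSeries.X : PowerSeries K) ^ k ∣ Polynomial.eval g Q} := by
  classical
  obtain ⟨B, hBcard, hBpos, hBdisj, hBunion⟩ := Stmt15Aux.key k hk Q hQ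
  refine ⟨B.card, hBcard, fun i => ((B.equivFin.symm i : B) : PowerSeries K × ℕ).1,
    fun i => ((B.equivFin.symm i : B) : PowerSeries K × ℕ).2, ?_, ?_, ?_⟩
  · intro i
    exact hBpos _ (B.equivFin.symm i).2
  · intro i j hij
    have hne : ((B.equivFin.symm i : B) : PowerSeries K × ℕ)
        ≠ ((B.equivFin.symm j : B) : PowerSeries K × ℕ) := by
      intro h
      exact hij (by
        have : B.equivFin.symm i = B.equivFin.symm j := Subtype.ext h
        exact B.equivFin.symm.injective.eq_iff.1 this)
    exact hBdisj _ (B.equivFin.symm i).2 _ (B.equivFin.symm j).2 hne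
  · rw [← hBunion]
    ext g
    simp only [Set.mem_iUnion, exists_prop]
    constructor
    · rintro ⟨i, hi⟩
      exact ⟨_, (B.equivFin.symm i).2, hi⟩
    · rintro ⟨p, hp, hg⟩
      refine ⟨B.equivFin ⟨p, hp⟩, ?_⟩
      rw [Equiv.symm_apply_apply]
      exact hg
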